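/- A ranked configuration of type (a) has a nonzero vector of periodicity: let S ⊆ Q^{ℤ²} be a closed, shift-invariant set and let x ∈ S be ranked (x ∉ S^{(λ)} for some ordinal λ) such that every pattern that appears in x appears in x at infinitely many translates; then there exists v ∈ ℤ², v ≠ 0, with σ_v(x) = x. -/

import Mathlib

open Set

/-- A configuration assigns a state to each cell of the plane. -/
abbrev Config (Q : Type*) : Type _ := (ℤ × ℤ) → Q

/-- The shift by a vector `v`: `σ_v c = fun x => c (x + v)`. -/
def shiftC {Q : Type*} (v : ℤ × ℤ) (c : Config Q) : Config Q := fun x => c (x + v)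

/-- The pattern `P` with (finite) domain `V` appears in `c` at translate `t`. -/
def AppearsAt {Q : Type*} (c : Config Q) (V : Finset (ℤ × ℤ)) (P : (ℤ × ℤ) → Q)
    (t : ℤ × ℤ) : Prop :=
  ∀ x ∈ V, c (x + t) = P x

/-- The pattern `P` with (finite) domain `V` appears in `c`. -/
def Appears {Q : Type*} (c : Config Q) (V : Finset (ℤ × ℤ)) (P : (ℤ × ℤ) → Q) : Prop :=
  ∃ t : ℤ × ℤ, AppearsAt c V P t

/-- The pattern preorder: `x ≼ y` iff every pattern appearing in `x` appears in `y`. -/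
def PatLe {Q : Type*} (x y : Config Q) : Prop :=
  ∀ (V : Finset (ℤ × ℤ)) (P : (ℤ × ℤ) → Q), Appears x V P → Appears y V P

/-- A set of configurations is shift-invariant. -/
def ShiftInvariant {Q : Type*} (S : Set (Config Q)) : Prop :=
  ∀ c ∈ S, ∀ v : ℤ × ℤ, shiftC v c ∈ S

/-- `c` is an isolated point of `S` (in the subspace topology). -/
def IsolatedIn {Q : Type*} [TopologicalSpace Q] (S : Set (Config Q)) (c : Config Q) : Prop :=
  ∃ U : Set (Config Q), IsOpen U ∧ U ∩ S = {c}

/-- The topological derivative: the non-isolated points of `S`. -/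
def derivSet {Q : Type*} [TopologicalSpace Q] (S : Set (Config Q)) : Set (Config Q) :=
  {c ∈ S | ¬ IsolatedIn S c}

/-- Transfinite iteration of the topological derivative (Cantor–Bendixson). -/
noncomputable def CBIter {Q : Type*} [TopologicalSpace Q] (S : Set (Config Q))
    (o : Ordinal) : Set (Config Q) :=
  Ordinal.limitRecOn o S (fun _ ih => derivSet ih)
    (fun o _ ih => ⋂ (β : {β : Ordinal // β < o}), ih β.1 β.2)

/-- The Cantor–Bendixson rank of `c` in `S`: least `λ` with `c ∉ S^{(λ)}`. -/
noncomputable def CBRank {Q : Type*} [TopologicalSpace Q] (S : Set (Config Q))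
    (c : Config Q) : Ordinal :=
  sInf {l : Ordinal | c ∉ CBIter S l}

/-- A configuration is periodic iff its shift orbit is finite (equivalently, its
stabilizer has finite index in `ℤ²`). -/
def IsPeriodic {Q : Type*} (c : Config Q) : Prop :=
  (Set.range fun v : ℤ × ℤ => shiftC v c).Finite

/-- `c` is a tiling for the tile-set with domain `V` and allowed patterns `A`. -/
def IsTiling {Q : Type*} (V : Finset (ℤ × ℤ)) (A : Set ({x // x ∈ V} → Q))
    (c : Config Q) : Prop :=
  ∀ t : ℤ × ℤ, (fun y : {x // x ∈ V} => c (t + y.1)) ∈ A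

/-- The set of tilings of a tile-set. -/
def Tilings {Q : Type*} (V : Finset (ℤ × ℤ)) (A : Set ({x // x ∈ V} → Q)) :
    Set (Config Q) :=
  {c | IsTiling V A c}

lemma shiftC_shiftC {Q : Type*} (v w : ℤ × ℤ) (c : Config Q) :
    shiftC v (shiftC w c) = shiftC (w + v) c := by
  funext y
  simp [shiftC, add_assoc, add_comm, add_left_comm]

lemma shiftC_zero {Q : Type*} (c : Config Q) : shiftC 0 c = c := by
  funext y; simp [shiftC]

lemma continuous_shiftC {Q : Type*} [TopologicalSpace Q] (v : ℤ × ℤ) :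
    Continuous fun c : Config Q => shiftC v c :=
  continuous_pi fun y => continuous_apply (y + v)

lemma derivSet_shiftInv {Q : Type*} [TopologicalSpace Q] {T : Set (Config Q)}
    (h : ShiftInvariant T) : ShiftInvariant (derivSet T) := by
  rintro c ⟨hcT, hniso⟩ v
  refine ⟨h c hcT v, ?_⟩
  rintro ⟨U, hU, hUT⟩
  apply hniso
  refine ⟨(fun d => shiftC v d) ⁻¹' U, hU.preimage (continuous_shiftC v), ?_⟩
  apply Set.eq_singleton_iff_unique_mem.2
  constructor
  · refine ⟨?_, hcT⟩
    show shiftC v c ∈ U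
    have := Set.eq_singleton_iff_unique_mem.1 hUT
    exact this.1.1
  · rintro d ⟨hdU, hdT⟩
    have hmem : shiftC v d ∈ U ∩ T := ⟨hdU, h d hdT v⟩
    rw [hUT] at hmem
    have : shiftC (-v) (shiftC v d) = shiftC (-v) (shiftC v c) := by
      rw [Set.mem_singleton_iff.1 hmem]
    rwa [shiftC_shiftC, shiftC_shiftC, add_neg_cancel, shiftC_zero, shiftC_zero] at this

lemma CBIter_zero {Q : Type*} [TopologicalSpace Q] (S : Set (Config Q)) :
    CBIter S 0 = S := Ordinal.limitRecOn_zero ..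

lemma CBIter_succ {Q : Type*} [TopologicalSpace Q] (S : Set (Config Q)) (o : Ordinal) :
    CBIter S (Order.succ o) = derivSet (CBIter S o) := Ordinal.limitRecOn_succ ..

lemma CBIter_limit {Q : Type*} [TopologicalSpace Q] (S : Set (Config Q)) {o : Ordinal}
    (h : Order.IsSuccLimit o) :
    CBIter S o = ⋂ (β : {β : Ordinal // β < o}), CBIter S β.1 :=
  Ordinal.limitRecOn_limit _ _ _ _ h

lemma CBIter_shiftInv {Q : Type*} [TopologicalSpace Q] {S : Set (Config Q)}
    (h : ShiftInvariant S) (o : Ordinal) : ShiftInvariant (CBIter S o) := by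
  induction o using Ordinal.limitRecOn with
  | zero => rwa [CBIter_zero]
  | add_one o ih => rw [Ordinal.add_one_eq_succ, CBIter_succ]; exact derivSet_shiftInv ih
  | limit o ho ih =>
      rw [CBIter_limit S ho]
      intro c hc v
      simp only [Set.mem_iInter] at hc ⊢
      exact fun β => ih β.1 β.2 c (hc β) v

/-- A ranked configuration of type (a) has a nonzero vector of
periodicity. -/
theorem stmt17 {Q : Type*} [Fintype Q] [Nonempty Q] [TopologicalSpace Q] [DiscreteTopology Q]
    (S : Set (Config Q)) (hcl : IsClosed S) (hinv : ShiftInvariant S)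
    (x : Config Q) (hx : x ∈ S)
    (hranked : ∃ lam : Ordinal, x ∉ CBIter S lam)
    (htypea : ∀ (V : Finset (ℤ × ℤ)) (P : (ℤ × ℤ) → Q),
      Appears x V P → {t : ℤ × ℤ | AppearsAt x V P t}.Infinite) :
    ∃ v : ℤ × ℤ, v ≠ 0 ∧ shiftC v x = x := by
  classical
  set s : Set Ordinal := {l | x ∉ CBIter S l} with hs
  have hsne : s.Nonempty := hranked
  obtain ⟨α, hαs, hαmin⟩ := Ordinal.lt_wf.has_min s hsne
  have hαs' : x ∉ CBIter S α := hαs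
  have hlt : ∀ β < α, x ∈ CBIter S β := by
    intro β hβ
    by_contra hβs
    exact hαmin β hβs hβ
  rcases Ordinal.zero_or_succ_or_isSuccLimit α with h0 | ⟨β, rfl⟩ | hl
  · exact absurd (by rwa [h0, CBIter_zero] at hαs') (not_not_intro hx)
  · -- successor case: x is isolated in T := CBIter S β
    set T := CBIter S β with hT
    have hxT : x ∈ T := hlt β (Order.lt_succ β)
    have hxnd : x ∉ derivSet T := by show x ∉ derivSet (CBIter S β); rw [← CBIter_succ]; exact hαs'
    have hiso : IsolatedIn T x := by
      by_contra hn
      exact hxnd ⟨hxT, hn⟩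
    obtain ⟨U, hUopen, hUT⟩ := hiso
    have hxU : x ∈ U := (Set.eq_singleton_iff_unique_mem.1 hUT).1.1
    obtain ⟨I, u, hu, hsub⟩ := (isOpen_pi_iff.1 hUopen) x hxU
    -- any configuration agreeing with x on I lies in U
    have hagree : ∀ c : Config Q, (∀ y ∈ I, c y = x y) → c ∈ U := by
      intro c hc
      apply hsub
      intro y hy
      rw [hc y hy]
      exact (hu y hy).2
    -- the pattern x restricted to I appears (at 0), so at infinitely many t
    have happ : Appears x I x := ⟨0, fun y _ => by rw [add_zero]⟩
    have hinf := htypea I x happ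
    obtain ⟨t, ht, ht0⟩ := (hinf.diff (Set.finite_singleton 0)).nonempty
    refine ⟨t, by simpa using ht0, ?_⟩
    have hmem : shiftC t x ∈ U ∩ T := by
      refine ⟨hagree _ ?_, CBIter_shiftInv hinv β x hxT t⟩
      intro y hy
      exact ht y hy
    rw [hUT] at hmem
    exact hmem
  · -- limit case: contradiction
    exfalso
    apply hαs'
    rw [CBIter_limit S hl]
    exact Set.mem_iInter.2 fun β => hlt β.1 β.2
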